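/- arXiv:1803.06876 — 2 statements merged into one kernel-verified Lean document; each statement's English description precedes it below -/
import Mathlib

section
/- Let X be a T₀ topological space, regarded as a poset under its specialization order, and let Irr(X) be the collection of all nonempty irreducible subsets of X, which is a minimal subset selection on this poset. Then the Irr-convergence structure in X (the 𝓜-convergence structure for 𝓜 = Irr(X) on the specialization poset) is topological if and only if X is Irr-continuous, i.e., the specialization poset of X is 𝓜-continuous for 𝓜 = Irr(X). -/
universe u

/-- A directed preordered index for a net: `r` is reflexive, transitive,
the index type is nonempty, and `r` is directed. -/
structure IsDirNet {I : Type u} (r : I → I → Prop) : Prop where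
  refl : ∀ i, r i i
  trans : ∀ {i j k : I}, r i j → r j k → r i k
  nonempty : Nonempty I
  directed : ∀ i j, ∃ k, r i k ∧ r j k

/-- A minimal subset selection on a poset `P`. -/
def MinSel {P : Type u} [PartialOrder P] (M : Set (Set P)) : Prop :=
  (∅ : Set P) ∉ M ∧ ∀ x : P, {x} ∈ M

/-- The net `f : I → P` (indexed by `(I, r)`) `𝓜`-converges to `x`. -/
def MConv {P : Type u} [PartialOrder P] (M : Set (Set P))
    {I : Type u} (r : I → I → Prop) (f : I → P) (x : P) : Prop :=
  ∃ A : Set P, ∃ s : P, A ∈ M ∧ IsLUB A s ∧ x ≤ s ∧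
    ∀ a ∈ A, ∃ i₀, ∀ i, r i₀ i → a ≤ f i

/-- The topology `τ_𝓜` induced by `𝓜`-convergence, as a collection of open sets. -/
def mTop {P : Type u} [PartialOrder P] (M : Set (Set P)) : Set (Set P) :=
  {U | ∀ (I : Type u) (r : I → I → Prop) (f : I → P) (x : P),
      IsDirNet r → MConv M r f x → x ∈ U → ∃ i₀, ∀ i, r i₀ i → f i ∈ U}

/-- The `𝓜`-convergence structure is topological: every net converging to `x` with
respect to `τ_𝓜` also `𝓜`-converges to `x`. -/
def MTopological {P : Type u} [PartialOrder P] (M : Set (Set P)) : Prop :=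
  ∀ (I : Type u) (r : I → I → Prop) (f : I → P) (x : P), IsDirNet r →
    (∀ U ∈ mTop M, x ∈ U → ∃ i₀, ∀ i, r i₀ i → f i ∈ U) →
    MConv M r f x

/-- The `𝓜`-way-below relation `x ≪_𝓜 y`. -/
def wayBelowM {P : Type u} [PartialOrder P] (M : Set (Set P)) (x y : P) : Prop :=
  ∀ (A : Set P) (s : P), A ∈ M → IsLUB A s → y ≤ s →
    ∃ B : Set P, B.Nonempty ∧ B.Finite ∧ B ⊆ A ∧ upperBounds B ⊆ Set.Ici x

/-- `𝓜`-continuity of the poset `P`. -/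
def MCont {P : Type u} [PartialOrder P] (M : Set (Set P)) : Prop :=
  ∀ x : P,
    (∃ A : Set P, ∃ s : P, A ∈ M ∧ IsLUB A s ∧ A ⊆ {y | wayBelowM M y x} ∧ x ≤ s) ∧
    {y | wayBelowM M x y} ∈ mTop M


section Lemmas
variable {P : Type u} [PartialOrder P] (M : Set (Set P))

lemma mTop_univ : (Set.univ : Set P) ∈ mTop M := by
  intro I r f x hdir _ _
  obtain ⟨i⟩ := hdir.nonempty
  exact ⟨i, fun j _ => Set.mem_univ _⟩

lemma mTop_inter {U V : Set P} (hU : U ∈ mTop M) (hV : V ∈ mTop M) : U ∩ V ∈ mTop M := by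
  intro I r f x hdir hconv hx
  obtain ⟨i₁, h₁⟩ := hU I r f x hdir hconv hx.1
  obtain ⟨i₂, h₂⟩ := hV I r f x hdir hconv hx.2
  obtain ⟨i₃, hi₁, hi₂⟩ := hdir.directed i₁ i₂
  exact ⟨i₃, fun i hi => ⟨h₁ i (hdir.trans hi₁ hi), h₂ i (hdir.trans hi₂ hi)⟩⟩

lemma mTop_sUnion {S : Set (Set P)} (hS : ∀ U ∈ S, U ∈ mTop M) : ⋃₀ S ∈ mTop M := by
  intro I r f x hdir hconv hx
  obtain ⟨U, hUS, hxU⟩ := hx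
  obtain ⟨i₀, h⟩ := hS U hUS I r f x hdir hconv hxU
  exact ⟨i₀, fun i hi => ⟨U, hUS, h i hi⟩⟩

lemma mTop_biInter {B : Set P} (hB : B.Finite) {U : P → Set P}
    (hU : ∀ b ∈ B, U b ∈ mTop M) : (⋂ b ∈ B, U b) ∈ mTop M := by
  refine Set.Finite.induction_on
    (motive := fun B _ => (∀ b ∈ B, U b ∈ mTop M) → (⋂ b ∈ B, U b) ∈ mTop M) B hB
    (fun _ => by simpa using mTop_univ M) ?_ hU
  intro a s _ _ ih hU'
  rw [Set.biInter_insert]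
  exact mTop_inter M (hU' _ (Set.mem_insert _ _))
    (ih fun b hb => hU' b (Set.mem_insert_of_mem _ hb))

lemma mTop_upper (hsing : ∀ x : P, {x} ∈ M) {U : Set P} (hU : U ∈ mTop M)
    {x y : P} (hxU : x ∈ U) (hxy : x ≤ y) : y ∈ U := by
  obtain ⟨i₀, h⟩ := hU PUnit.{u+1} (fun _ _ => True) (fun _ => y) x
    ⟨fun _ => trivial, fun _ _ => trivial, ⟨PUnit.unit⟩, fun i j => ⟨i, trivial, trivial⟩⟩
    ⟨{y}, y, hsing y, isLUB_singleton, hxy, fun a ha => ⟨PUnit.unit, fun i _ => le_of_eq ha⟩⟩ hxU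
  exact h PUnit.unit trivial

end Lemmas

section Key
variable {P : Type u} [PartialOrder P] (M : Set (Set P))

lemma singleton_wayBelow (hsing : ∀ x : P, {x} ∈ M) {x y : P}
    (h : wayBelowM M x y) : x ≤ y := by
  obtain ⟨B, _, _, hBsub, hub⟩ := h {y} y (hsing y) isLUB_singleton le_rfl
  exact hub fun b hb => le_of_eq (hBsub hb)

/-- If `x` is a lower bound of some `τ_M`-open set containing `y`, then `x ≪_M y`. -/
lemma lb_open_wayBelow (hsing : ∀ x : P, {x} ∈ M) (hne : ∀ A ∈ M, A.Nonempty)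
    {x y : P} {U : Set P} (hU : U ∈ mTop M) (hyU : y ∈ U) (hlb : ∀ z ∈ U, x ≤ z) :
    wayBelowM M x y := by
  intro A s hA hlub hys
  obtain ⟨a₀, ha₀⟩ := hne A hA
  have hs_ub : s ∈ upperBounds A := hlub.1
  -- index: finite nonempty subsets of A paired with an upper bound
  let J := {p : Set P × P // p.1.Nonempty ∧ p.1.Finite ∧ p.1 ⊆ A ∧ p.2 ∈ upperBounds p.1}
  let r : J → J → Prop := fun p q => p.1.1 ⊆ q.1.1
  let f : J → P := fun p => p.1.2
  have hdir : IsDirNet r := by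
    refine ⟨fun i => subset_rfl, fun h1 h2 => h1.trans h2,
      ⟨⟨({a₀}, s), Set.singleton_nonempty _, Set.finite_singleton _,
        Set.singleton_subset_iff.2 ha₀, fun b hb => hs_ub (by rw [hb]; exact ha₀)⟩⟩,
      fun i j => ?_⟩
    refine ⟨⟨(i.1.1 ∪ j.1.1, s), i.2.1.mono Set.subset_union_left,
      i.2.2.1.union j.2.2.1, Set.union_subset i.2.2.2.1 j.2.2.2.1,
      fun b hb => hs_ub (Set.union_subset i.2.2.2.1 j.2.2.2.1 hb)⟩,
      Set.subset_union_left, Set.subset_union_right⟩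
  have hconv : MConv M r f s := by
    refine ⟨A, s, hA, hlub, le_rfl, fun a ha => ?_⟩
    refine ⟨⟨({a}, s), Set.singleton_nonempty _, Set.finite_singleton _,
      Set.singleton_subset_iff.2 ha, fun b hb => hs_ub (by rw [hb]; exact ha)⟩,
      fun q hq => q.2.2.2.2 (hq rfl)⟩
  have hsU : s ∈ U := mTop_upper M hsing hU hyU hys
  obtain ⟨i₀, hev⟩ := hU J r f s hdir hconv hsU
  refine ⟨i₀.1.1, i₀.2.1, i₀.2.2.1, i₀.2.2.2.1, fun u hu => ?_⟩
  exact hlb u (hev ⟨(i₀.1.1, u), i₀.2.1, i₀.2.2.1, i₀.2.2.2.1, hu⟩ subset_rfl)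

end Key

section Main
variable {P : Type u} [PartialOrder P]

theorem abstract_iff (M : Set (Set P)) (hsing : ∀ x : P, {x} ∈ M)
    (hne : ∀ A ∈ M, A.Nonempty) : MTopological M ↔ MCont M := by
  constructor
  · intro htop x
    -- the neighborhood net at a point y
    have key : ∀ y : P, ∃ A : Set P, ∃ s : P, A ∈ M ∧ IsLUB A s ∧ y ≤ s ∧
        ∀ a ∈ A, ∃ U ∈ mTop M, y ∈ U ∧ ∀ z ∈ U, a ≤ z := by
      intro y
      let J := {p : Set P × P // p.1 ∈ mTop M ∧ y ∈ p.1 ∧ p.2 ∈ p.1}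
      let r : J → J → Prop := fun p q => q.1.1 ⊆ p.1.1
      let f : J → P := fun p => p.1.2
      have hdir : IsDirNet r :=
        ⟨fun i => subset_rfl, fun h1 h2 => h2.trans h1,
          ⟨⟨(Set.univ, y), mTop_univ M, Set.mem_univ _, Set.mem_univ _⟩⟩,
          fun i j => ⟨⟨(i.1.1 ∩ j.1.1, y), mTop_inter M i.2.1 j.2.1,
            ⟨i.2.2.1, j.2.2.1⟩, ⟨i.2.2.1, j.2.2.1⟩⟩,
            Set.inter_subset_left, Set.inter_subset_right⟩⟩
      have htconv : ∀ U ∈ mTop M, y ∈ U → ∃ i₀ : J, ∀ i, r i₀ i → f i ∈ U := by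
        intro U hU hyU
        exact ⟨⟨(U, y), hU, hyU, hyU⟩, fun q hq => hq q.2.2.2⟩
      obtain ⟨A, s, hA, hlub, hys, hev⟩ := htop J r f y hdir htconv
      refine ⟨A, s, hA, hlub, hys, fun a ha => ?_⟩
      obtain ⟨i₀, h⟩ := hev a ha
      exact ⟨i₀.1.1, i₀.2.1, i₀.2.2.1,
        fun z hz => h ⟨(i₀.1.1, z), i₀.2.1, i₀.2.2.1, hz⟩ subset_rfl⟩
    constructor
    · obtain ⟨A, s, hA, hlub, hxs, hev⟩ := key x
      refine ⟨A, s, hA, hlub, fun a ha => ?_, hxs⟩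
      obtain ⟨U, hU, hxU, hlb⟩ := hev a ha
      exact lb_open_wayBelow M hsing hne hU hxU hlb
    · -- {y | x ≪ y} is the union of all opens whose elements are all ≥ x
      have : {y | wayBelowM M x y} = ⋃₀ {U | U ∈ mTop M ∧ ∀ z ∈ U, x ≤ z} := by
        ext y
        constructor
        · intro hwb
          obtain ⟨A, s, hA, hlub, hys, hev⟩ := key y
          obtain ⟨B, hBne, hBfin, hBsub, hub⟩ := hwb A s hA hlub hys
          have h' : ∀ b : P, ∃ U : Set P, U ∈ mTop M ∧
              (b ∈ B → y ∈ U ∧ ∀ z ∈ U, b ≤ z) := by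
            intro b
            by_cases hb : b ∈ B
            · obtain ⟨U, h1, h2, h3⟩ := hev b (hBsub hb)
              exact ⟨U, h1, fun _ => ⟨h2, h3⟩⟩
            · exact ⟨Set.univ, mTop_univ M, fun hb' => absurd hb' hb⟩
          choose V hV1 hV2 using h'
          refine ⟨⋂ b ∈ B, V b, ⟨?_, ?_⟩, ?_⟩
          · exact mTop_biInter M hBfin fun b _ => hV1 b
          · intro z hz
            exact hub fun b hb => (hV2 b hb).2 z (Set.mem_iInter₂.1 hz b hb)
          · exact Set.mem_iInter₂.2 fun b hb => (hV2 b hb).1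
        · rintro ⟨U, ⟨hU, hlb⟩, hyU⟩
          exact lb_open_wayBelow M hsing hne hU hyU hlb
      rw [this]
      exact mTop_sUnion M fun U hU => hU.1
  · intro hcont I r rf x hdir hconv
    obtain ⟨⟨A, s, hA, hlub, hsub, hxs⟩, _⟩ := hcont x
    refine ⟨A, s, hA, hlub, hxs, fun a ha => ?_⟩
    obtain ⟨i₀, h⟩ := hconv _ (hcont a).2 (hsub ha)
    exact ⟨i₀, fun i hi => singleton_wayBelow M hsing (h i hi)⟩

end Main

/-- For a T₀ space `X` with its specialization order, the Irr-convergence structure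
is topological iff `X` is Irr-continuous. -/
theorem stmt_7 {X : Type u} [TopologicalSpace X] [T0Space X] :
    let inst : PartialOrder X := specializationOrder X
    let Irr : Set (Set X) := {A | A.Nonempty ∧
      ∀ C D : Set X, IsClosed C → IsClosed D → A ⊆ C ∪ D → A ⊆ C ∨ A ⊆ D}
    (MTopological Irr ↔ MCont Irr) := by
  intro _inst Irr
  exact abstract_iff Irr
    (fun x => ⟨Set.singleton_nonempty x, fun C D _ _ hsub =>
      (hsub rfl).imp Set.singleton_subset_iff.2 Set.singleton_subset_iff.2⟩)
    (fun A hA => hA.1)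
end

section
/- Let P be a poset and 𝓜, 𝓝 minimal subset selections on P. Then P is 𝓜𝓝-continuous if and only if the 𝓜𝓝-convergence structure in P is topological (i.e., every net converging to a point x in the topology τ_𝓜𝓝 also 𝓜𝓝-converges to x). -/
universe u

/-- The net `f : I → P` `𝓜𝓝`-converges to `x`. -/
def MNConv {P : Type u} [PartialOrder P] (M N : Set (Set P))
    {I : Type u} (r : I → I → Prop) (f : I → P) (x : P) : Prop :=
  ∃ A S : Set P, A ∈ M ∧ S ∈ N ∧ IsLUB A x ∧ IsGLB S x ∧
    ∀ a ∈ A, ∀ s ∈ S, ∃ i₀, ∀ i, r i₀ i → a ≤ f i ∧ f i ≤ s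

/-- The topology `τ_𝓜𝓝` induced by `𝓜𝓝`-convergence. -/
def mnTop {P : Type u} [PartialOrder P] (M N : Set (Set P)) : Set (Set P) :=
  {U | ∀ (I : Type u) (r : I → I → Prop) (f : I → P) (x : P),
      IsDirNet r → MNConv M N r f x → x ∈ U → ∃ i₀, ∀ i, r i₀ i → f i ∈ U}

/-- The `𝓜𝓝`-convergence structure is topological. -/
def MNTopological {P : Type u} [PartialOrder P] (M N : Set (Set P)) : Prop :=
  ∀ (I : Type u) (r : I → I → Prop) (f : I → P) (x : P), IsDirNet r →
    (∀ U ∈ mnTop M N, x ∈ U → ∃ i₀, ∀ i, r i₀ i → f i ∈ U) →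
    MNConv M N r f x

/-- The relation `x ≪_𝓜𝓝 y`. -/
def wbMN {P : Type u} [PartialOrder P] (M N : Set (Set P)) (x y : P) : Prop :=
  ∀ A S : Set P, A ∈ M → S ∈ N → IsLUB A y → IsGLB S y →
    ∃ B T : Set P, B.Nonempty ∧ B.Finite ∧ B ⊆ A ∧ T.Nonempty ∧ T.Finite ∧ T ⊆ S ∧
      upperBounds B ∩ lowerBounds T ⊆ Set.Ici x

/-- The relation `y ◁_𝓜𝓝 z`. -/
def triMN {P : Type u} [PartialOrder P] (M N : Set (Set P)) (y z : P) : Prop :=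
  ∀ A S : Set P, A ∈ M → S ∈ N → IsLUB A y → IsGLB S y →
    ∃ B T : Set P, B.Nonempty ∧ B.Finite ∧ B ⊆ A ∧ T.Nonempty ∧ T.Finite ∧ T ⊆ S ∧
      upperBounds B ∩ lowerBounds T ⊆ Set.Iic z

/-- `𝓜𝓝`-continuity of the poset `P`. -/
def MNCont {P : Type u} [PartialOrder P] (M N : Set (Set P)) : Prop :=
  ∀ x y : P,
    (∃ A S : Set P, A ∈ M ∧ S ∈ N ∧ A ⊆ {w | wbMN M N w x} ∧
      S ⊆ {w | triMN M N x w} ∧ IsLUB A x ∧ IsGLB S x) ∧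
    ({w | wbMN M N x w} ∩ {w | triMN M N w y}) ∈ mnTop M N


def keyGood {P : Type u} [PartialOrder P] (A S U : Set P) (q : Set P × Set P × P) : Prop :=
  q.1.Nonempty ∧ q.1.Finite ∧ q.1 ⊆ A ∧ q.2.1.Nonempty ∧ q.2.1.Finite ∧ q.2.1 ⊆ S ∧
  q.2.2 ∈ upperBounds q.1 ∧ q.2.2 ∈ lowerBounds q.2.1 ∧ q.2.2 ∉ U

section Aux17
variable {P : Type u} [PartialOrder P] {M N : Set (Set P)}

lemma wb_le_aux (hM : MinSel M) (hN : MinSel N) {x y : P} (h : wbMN M N x y) : x ≤ y := by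
  obtain ⟨B, T, hBne, -, hBsub, hTne, -, hTsub, hsub⟩ :=
    h {y} {y} (hM.2 y) (hN.2 y) isLUB_singleton isGLB_singleton
  exact hsub ⟨fun b hb => le_of_eq (Set.mem_singleton_iff.mp (hBsub hb)),
    fun t ht => ge_of_eq (Set.mem_singleton_iff.mp (hTsub ht))⟩

lemma tri_le_aux (hM : MinSel M) (hN : MinSel N) {y z : P} (h : triMN M N y z) : y ≤ z := by
  obtain ⟨B, T, hBne, -, hBsub, hTne, -, hTsub, hsub⟩ :=
    h {y} {y} (hM.2 y) (hN.2 y) isLUB_singleton isGLB_singleton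
  exact hsub ⟨fun b hb => le_of_eq (Set.mem_singleton_iff.mp (hBsub hb)),
    fun t ht => ge_of_eq (Set.mem_singleton_iff.mp (hTsub ht))⟩

lemma univ_mem_mnTop : (Set.univ : Set P) ∈ mnTop M N := by
  intro I r f x hd _ _
  obtain ⟨i₀⟩ := hd.nonempty
  exact ⟨i₀, fun i _ => trivial⟩

lemma inter_mem_mnTop {U V : Set P} (hU : U ∈ mnTop M N) (hV : V ∈ mnTop M N) :
    U ∩ V ∈ mnTop M N := by
  intro I r f x hd hc hx
  obtain ⟨i₁, h1⟩ := hU I r f x hd hc hx.1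
  obtain ⟨i₂, h2⟩ := hV I r f x hd hc hx.2
  obtain ⟨k, hk1, hk2⟩ := hd.directed i₁ i₂
  exact ⟨k, fun i hi => ⟨h1 i (hd.trans hk1 hi), h2 i (hd.trans hk2 hi)⟩⟩

lemma sInter_mem_mnTop {F : Set (Set P)} (hF : F.Finite) (h : ∀ V ∈ F, V ∈ mnTop M N) :
    ⋂₀ F ∈ mnTop M N := by
  refine Set.Finite.induction_on
    (motive := fun F _ => (∀ V ∈ F, V ∈ mnTop M N) → ⋂₀ F ∈ mnTop M N) F hF ?_ ?_ h
  · intro _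
    simpa using (univ_mem_mnTop (M := M) (N := N))
  · intro V F' _ _ ih hall
    rw [Set.sInter_insert]
    exact inter_mem_mnTop (hall _ (Set.mem_insert _ _))
      (ih fun W hW => hall W (Set.mem_insert_of_mem _ hW))

lemma key_open {U : Set P} {z : P} {A S : Set P} (hU : U ∈ mnTop M N) (hz : z ∈ U)
    (hA : A ∈ M) (hS : S ∈ N) (hAne : A.Nonempty) (hSne : S.Nonempty)
    (hlub : IsLUB A z) (hglb : IsGLB S z) :
    ∃ B T : Set P, B.Nonempty ∧ B.Finite ∧ B ⊆ A ∧ T.Nonempty ∧ T.Finite ∧ T ⊆ S ∧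
      upperBounds B ∩ lowerBounds T ⊆ U := by
  by_contra hcon
  have hpick : ∀ B T : Set P, B.Nonempty → B.Finite → B ⊆ A → T.Nonempty → T.Finite → T ⊆ S →
      ∃ p, p ∈ upperBounds B ∧ p ∈ lowerBounds T ∧ p ∉ U := by
    intro B T h1 h2 h3 h4 h5 h6
    by_contra hp
    push_neg at hp
    exact hcon ⟨B, T, h1, h2, h3, h4, h5, h6, fun q hq => hp q hq.1 hq.2⟩
  have mk : ∀ B T : Set P, B.Nonempty → B.Finite → B ⊆ A → T.Nonempty → T.Finite → T ⊆ S →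
      ∃ i : {q : Set P × Set P × P // keyGood A S U q}, i.1.1 = B ∧ i.1.2.1 = T := by
    intro B T h1 h2 h3 h4 h5 h6
    obtain ⟨p, hp1, hp2, hp3⟩ := hpick B T h1 h2 h3 h4 h5 h6
    exact ⟨⟨(B, T, p), h1, h2, h3, h4, h5, h6, hp1, hp2, hp3⟩, rfl, rfl⟩
  obtain ⟨a0, ha0⟩ := hAne
  obtain ⟨s0, hs0⟩ := hSne
  obtain ⟨i00, -, -⟩ := mk {a0} {s0} (Set.singleton_nonempty _) (Set.finite_singleton _)
    (Set.singleton_subset_iff.mpr ha0) (Set.singleton_nonempty _) (Set.finite_singleton _)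
    (Set.singleton_subset_iff.mpr hs0)
  have hdir : IsDirNet (fun (i j : {q : Set P × Set P × P // keyGood A S U q}) =>
      i.1.1 ⊆ j.1.1 ∧ i.1.2.1 ⊆ j.1.2.1) := by
    refine ⟨fun i => ⟨subset_rfl, subset_rfl⟩, fun hij hjk => ⟨hij.1.trans hjk.1, hij.2.trans hjk.2⟩,
      ⟨i00⟩, ?_⟩
    intro i j
    obtain ⟨h1, h2, h3, h4, h5, h6, -, -, -⟩ := i.2
    obtain ⟨g1, g2, g3, g4, g5, g6, -, -, -⟩ := j.2
    obtain ⟨k, hk1, hk2⟩ := mk (i.1.1 ∪ j.1.1) (i.1.2.1 ∪ j.1.2.1)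
      (h1.mono Set.subset_union_left) (h2.union g2) (Set.union_subset h3 g3)
      (h4.mono Set.subset_union_left) (h5.union g5) (Set.union_subset h6 g6)
    exact ⟨k, ⟨hk1 ▸ Set.subset_union_left, hk2 ▸ Set.subset_union_left⟩,
      ⟨hk1 ▸ Set.subset_union_right, hk2 ▸ Set.subset_union_right⟩⟩
  have hconv : MNConv M N (fun (i j : {q : Set P × Set P × P // keyGood A S U q}) =>
      i.1.1 ⊆ j.1.1 ∧ i.1.2.1 ⊆ j.1.2.1) (fun i => i.1.2.2) z := by
    refine ⟨A, S, hA, hS, hlub, hglb, ?_⟩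
    intro a ha s hs
    obtain ⟨i₀, hB, hT⟩ := mk {a} {s} (Set.singleton_nonempty _) (Set.finite_singleton _)
      (Set.singleton_subset_iff.mpr ha) (Set.singleton_nonempty _) (Set.finite_singleton _)
      (Set.singleton_subset_iff.mpr hs)
    refine ⟨i₀, fun i hi => ?_⟩
    obtain ⟨-, -, -, -, -, -, h7, h8, -⟩ := i.2
    exact ⟨h7 (hi.1 (hB ▸ Set.mem_singleton a)), h8 (hi.2 (hT ▸ Set.mem_singleton s))⟩
  obtain ⟨i₀, hi₀⟩ := hU _ _ _ z hdir hconv hz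
  exact i₀.2.2.2.2.2.2.2.2.2 (hi₀ i₀ ⟨subset_rfl, subset_rfl⟩)

lemma open_subset_Ici_wb (hM : MinSel M) (hN : MinSel N) {U : Set P} {x w : P}
    (hU : U ∈ mnTop M N) (hw : w ∈ U) (hsub : U ⊆ Set.Ici x) : wbMN M N x w := by
  intro A S hA hS hlub hglb
  obtain ⟨B, T, h1, h2, h3, h4, h5, h6, h7⟩ := key_open hU hw hA hS
    (Set.nonempty_iff_ne_empty.mpr fun h => hM.1 (h ▸ hA))
    (Set.nonempty_iff_ne_empty.mpr fun h => hN.1 (h ▸ hS)) hlub hglb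
  exact ⟨B, T, h1, h2, h3, h4, h5, h6, h7.trans hsub⟩

lemma open_subset_Iic_tri (hM : MinSel M) (hN : MinSel N) {U : Set P} {w y : P}
    (hU : U ∈ mnTop M N) (hw : w ∈ U) (hsub : U ⊆ Set.Iic y) : triMN M N w y := by
  intro A S hA hS hlub hglb
  obtain ⟨B, T, h1, h2, h3, h4, h5, h6, h7⟩ := key_open hU hw hA hS
    (Set.nonempty_iff_ne_empty.mpr fun h => hM.1 (h ▸ hA))
    (Set.nonempty_iff_ne_empty.mpr fun h => hN.1 (h ▸ hS)) hlub hglb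
  exact ⟨B, T, h1, h2, h3, h4, h5, h6, h7.trans hsub⟩

lemma canon_net (hT : MNTopological M N) (x : P) :
    ∃ A S : Set P, A ∈ M ∧ S ∈ N ∧ IsLUB A x ∧ IsGLB S x ∧
      ∀ a ∈ A, ∀ s ∈ S, ∃ U ∈ mnTop M N, x ∈ U ∧ U ⊆ Set.Icc a s := by
  have hdir : IsDirNet (fun (i j : {q : Set P × P // q.1 ∈ mnTop M N ∧ x ∈ q.1 ∧ q.2 ∈ q.1}) =>
      j.1.1 ⊆ i.1.1) := by
    refine ⟨fun i => subset_rfl, fun hij hjk => hjk.trans hij,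
      ⟨⟨(Set.univ, x), univ_mem_mnTop, Set.mem_univ x, Set.mem_univ x⟩⟩, ?_⟩
    intro i j
    exact ⟨⟨(i.1.1 ∩ j.1.1, x), inter_mem_mnTop i.2.1 j.2.1, ⟨i.2.2.1, j.2.2.1⟩,
      ⟨i.2.2.1, j.2.2.1⟩⟩, Set.inter_subset_left, Set.inter_subset_right⟩
  have hconv : ∀ U ∈ mnTop M N, x ∈ U →
      ∃ i₀ : {q : Set P × P // q.1 ∈ mnTop M N ∧ x ∈ q.1 ∧ q.2 ∈ q.1},
        ∀ i, i.1.1 ⊆ i₀.1.1 → (fun i : {q : Set P × P // q.1 ∈ mnTop M N ∧ x ∈ q.1 ∧ q.2 ∈ q.1}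
          => i.1.2) i ∈ U := by
    intro U hU hxU
    exact ⟨⟨(U, x), hU, hxU, hxU⟩, fun i hi => hi i.2.2.2⟩
  obtain ⟨A, S, hA, hS, hlub, hglb, hev⟩ := hT _ _
    (fun i : {q : Set P × P // q.1 ∈ mnTop M N ∧ x ∈ q.1 ∧ q.2 ∈ q.1} => i.1.2) x hdir hconv
  refine ⟨A, S, hA, hS, hlub, hglb, ?_⟩
  intro a ha s hs
  obtain ⟨i₀, hi₀⟩ := hev a ha s hs
  refine ⟨i₀.1.1, i₀.2.1, i₀.2.2.1, ?_⟩
  intro p hp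
  exact Set.mem_Icc.mpr (hi₀ ⟨(i₀.1.1, p), i₀.2.1, i₀.2.2.1, hp⟩ subset_rfl)

lemma wb_open_aux (hT : MNTopological M N) {x w : P} (h : wbMN M N x w) :
    ∃ U ∈ mnTop M N, w ∈ U ∧ U ⊆ Set.Ici x := by
  classical
  obtain ⟨A, S, hA, hS, hlub, hglb, hcan⟩ := canon_net hT w
  obtain ⟨B, T, hBne, hBfin, hBA, hTne, hTfin, hTS, hBT⟩ := h A S hA hS hlub hglb
  have hcan' : ∀ p : P × P, ∃ U : Set P,
      (p.1 ∈ A ∧ p.2 ∈ S) → (U ∈ mnTop M N ∧ w ∈ U ∧ U ⊆ Set.Icc p.1 p.2) := by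
    intro p
    by_cases hp : p.1 ∈ A ∧ p.2 ∈ S
    · obtain ⟨U, h1, h2, h3⟩ := hcan p.1 hp.1 p.2 hp.2
      exact ⟨U, fun _ => ⟨h1, h2, h3⟩⟩
    · exact ⟨Set.univ, fun hc => absurd hc hp⟩
  choose g hg using hcan'
  refine ⟨⋂₀ (g '' (B ×ˢ T)), sInter_mem_mnTop ((hBfin.prod hTfin).image g) ?_, ?_, ?_⟩
  · rintro V ⟨p, hp, rfl⟩
    exact (hg p ⟨hBA hp.1, hTS hp.2⟩).1
  · rw [Set.mem_sInter]
    rintro V ⟨p, hp, rfl⟩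
    exact (hg p ⟨hBA hp.1, hTS hp.2⟩).2.1
  · intro q hq
    refine hBT ⟨fun b hb => ?_, fun t ht => ?_⟩
    · obtain ⟨t, ht⟩ := hTne
      exact ((hg (b, t) ⟨hBA hb, hTS ht⟩).2.2
        (hq _ ⟨(b, t), Set.mk_mem_prod hb ht, rfl⟩)).1
    · obtain ⟨b, hb⟩ := hBne
      exact ((hg (b, t) ⟨hBA hb, hTS ht⟩).2.2
        (hq _ ⟨(b, t), Set.mk_mem_prod hb ht, rfl⟩)).2

lemma tri_open_aux (hT : MNTopological M N) {w y : P} (h : triMN M N w y) :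
    ∃ U ∈ mnTop M N, w ∈ U ∧ U ⊆ Set.Iic y := by
  classical
  obtain ⟨A, S, hA, hS, hlub, hglb, hcan⟩ := canon_net hT w
  obtain ⟨B, T, hBne, hBfin, hBA, hTne, hTfin, hTS, hBT⟩ := h A S hA hS hlub hglb
  have hcan' : ∀ p : P × P, ∃ U : Set P,
      (p.1 ∈ A ∧ p.2 ∈ S) → (U ∈ mnTop M N ∧ w ∈ U ∧ U ⊆ Set.Icc p.1 p.2) := by
    intro p
    by_cases hp : p.1 ∈ A ∧ p.2 ∈ S
    · obtain ⟨U, h1, h2, h3⟩ := hcan p.1 hp.1 p.2 hp.2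
      exact ⟨U, fun _ => ⟨h1, h2, h3⟩⟩
    · exact ⟨Set.univ, fun hc => absurd hc hp⟩
  choose g hg using hcan'
  refine ⟨⋂₀ (g '' (B ×ˢ T)), sInter_mem_mnTop ((hBfin.prod hTfin).image g) ?_, ?_, ?_⟩
  · rintro V ⟨p, hp, rfl⟩
    exact (hg p ⟨hBA hp.1, hTS hp.2⟩).1
  · rw [Set.mem_sInter]
    rintro V ⟨p, hp, rfl⟩
    exact (hg p ⟨hBA hp.1, hTS hp.2⟩).2.1
  · intro q hq
    refine hBT ⟨fun b hb => ?_, fun t ht => ?_⟩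
    · obtain ⟨t, ht⟩ := hTne
      exact ((hg (b, t) ⟨hBA hb, hTS ht⟩).2.2
        (hq _ ⟨(b, t), Set.mk_mem_prod hb ht, rfl⟩)).1
    · obtain ⟨b, hb⟩ := hBne
      exact ((hg (b, t) ⟨hBA hb, hTS ht⟩).2.2
        (hq _ ⟨(b, t), Set.mk_mem_prod hb ht, rfl⟩)).2

end Aux17

/-- `P` is 𝓜𝓝-continuous iff the 𝓜𝓝-convergence structure is topological. -/
theorem stmt_17 {P : Type u} [PartialOrder P] (M N : Set (Set P))
    (hM : MinSel M) (hN : MinSel N) : MNCont M N ↔ MNTopological M N := by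
  constructor
  · intro hC I r f x hd hconv
    obtain ⟨⟨A, S, hA, hS, hAx, hSx, hlub, hglb⟩, -⟩ := hC x x
    refine ⟨A, S, hA, hS, hlub, hglb, ?_⟩
    intro a ha s hs
    obtain ⟨i₀, hi₀⟩ := hconv _ (hC a s).2 ⟨hAx ha, hSx hs⟩
    exact ⟨i₀, fun i hi => ⟨wb_le_aux hM hN (hi₀ i hi).1, tri_le_aux hM hN (hi₀ i hi).2⟩⟩
  · intro hT x y
    constructor
    · obtain ⟨A, S, hA, hS, hlub, hglb, hcan⟩ := canon_net hT x
      refine ⟨A, S, hA, hS, ?_, ?_, hlub, hglb⟩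
      · intro a ha
        obtain ⟨s, hs⟩ := Set.nonempty_iff_ne_empty.mpr (fun h => hN.1 (h ▸ hS))
        obtain ⟨U, hU, hxU, hUsub⟩ := hcan a ha s hs
        exact open_subset_Ici_wb hM hN hU hxU (fun p hp => (hUsub hp).1)
      · intro s hs
        obtain ⟨a, ha⟩ := Set.nonempty_iff_ne_empty.mpr (fun h => hM.1 (h ▸ hA))
        obtain ⟨U, hU, hxU, hUsub⟩ := hcan a ha s hs
        exact open_subset_Iic_tri hM hN hU hxU (fun p hp => (hUsub hp).2)
    · intro I r f z hd hconv hzW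
      obtain ⟨U1, hU1, hz1, hs1⟩ := wb_open_aux hT hzW.1
      obtain ⟨U2, hU2, hz2, hs2⟩ := tri_open_aux hT hzW.2
      have hUV := inter_mem_mnTop hU1 hU2
      obtain ⟨i₀, hi₀⟩ := hUV I r f z hd hconv ⟨hz1, hz2⟩
      refine ⟨i₀, fun i hi => ?_⟩
      have hfi := hi₀ i hi
      exact ⟨open_subset_Ici_wb hM hN hUV hfi (fun p hp => hs1 hp.1),
        open_subset_Iic_tri hM hN hUV hfi (fun p hp => hs2 hp.2)⟩
end
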